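/- Let Ω = ⋃_{n≥1} [1/n − 1/2ⁿ, 1/n) and χ_Ω : ℝ → ℝ its characteristic function. Then 0 is the approximate (T₂) limit of χ_Ω at 0, but 0 is not the T₆ limit of χ_Ω at 0: for every ε ∈ (0, 1] and every δ > 0, the set {x ∈ (−δ, δ) \ {0} : |χ_Ω(x)| ≥ ε} has positive Lebesgue measure. -/

import Mathlib

open MeasureTheory Filter

/-- The set Ω = ⋃_{n ≥ 1} [1/n - 1/2ⁿ, 1/n). -/
def OmegaSet : Set ℝ :=
  ⋃ n : ℕ, Set.Ico (1 / (n + 1 : ℝ) - 1 / 2 ^ (n + 1)) (1 / (n + 1 : ℝ))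

/-- Characteristic function of Ω. -/
noncomputable def chiOmega : ℝ → ℝ := Set.indicator OmegaSet (fun _ => 1)

lemma aux_two_pow (n : ℕ) : (2 * (n + 1) : ℝ) ≤ 2 ^ (n + 1) := by
  have h : 2 * (n + 1) ≤ 2 ^ (n + 1) := by
    have := Nat.lt_two_pow_self (n := n)
    calc 2 * (n + 1) ≤ 2 * 2 ^ n := by omega
    _ = 2 ^ (n + 1) := by ring
  exact_mod_cast h

lemma aux_lb (n : ℕ) : (1 / (2 * (n + 1)) : ℝ) ≤ 1 / (n + 1 : ℝ) - 1 / 2 ^ (n + 1) := by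
  have h0 : (0:ℝ) < 2 * (n + 1) := by positivity
  have h1 : (1 / 2 ^ (n + 1) : ℝ) ≤ 1 / (2 * (n + 1)) :=
    one_div_le_one_div_of_le h0 (aux_two_pow n)
  have h2 : (1 / (n + 1 : ℝ)) - 1 / (2 * (n + 1)) = 1 / (2 * (n + 1)) := by
    have : ((n:ℝ) + 1) ≠ 0 := by positivity
    field_simp
    ring
  linarith

lemma chi_ne_zero {x : ℝ} {ε : ℝ} (hε : 0 < ε) (h : ε ≤ |chiOmega x - 0|) : x ∈ OmegaSet := by
  by_contra hx
  rw [chiOmega, Set.indicator_of_notMem hx] at h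
  simp at h
  linarith

/-- Key measure bound: if δ ≤ 1/(2(m+1)) then the part of Ω in (-δ, δ) has measure
at most (1/2)^(m+1). -/
lemma vol_bound (m : ℕ) {δ : ℝ} (hδ : δ ≤ 1 / (2 * (m + 1))) :
    volume (OmegaSet ∩ Set.Ioo (-δ) δ) ≤ ENNReal.ofReal ((1/2 : ℝ) ^ (m + 1)) := by
  have hsub : OmegaSet ∩ Set.Ioo (-δ) δ ⊆
      ⋃ k : ℕ, Set.Ico (1 / ((m + 1 + k) + 1 : ℝ) - 1 / 2 ^ ((m + 1 + k) + 1))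
        (1 / ((m + 1 + k) + 1 : ℝ)) := by
    rintro x ⟨hxΩ, hx1, hx2⟩
    rw [OmegaSet, Set.mem_iUnion] at hxΩ
    obtain ⟨n, hn⟩ := hxΩ
    have hge : m + 1 ≤ n := by
      by_contra hlt
      push_neg at hlt
      have h1 : (1 / (2 * (m + 1)) : ℝ) ≤ 1 / (2 * (n + 1)) := by
        apply one_div_le_one_div_of_le (by positivity)
        have : (n : ℝ) ≤ m := by exact_mod_cast Nat.lt_succ_iff.mp hlt
        linarith
      have := aux_lb n
      have hxlb := hn.1
      linarith [hn.2]
    obtain ⟨k, rfl⟩ : ∃ k, n = m + 1 + k := ⟨n - (m + 1), by omega⟩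
    rw [Set.mem_iUnion]
    refine ⟨k, ?_⟩
    have hc : ((m:ℝ) + 1 + (k:ℝ) + 1) = ((m + 1 + k : ℕ) : ℝ) + 1 := by push_cast; ring
    rw [hc]
    exact hn
  calc volume (OmegaSet ∩ Set.Ioo (-δ) δ) ≤
      ∑' k : ℕ, volume (Set.Ico (1 / ((m + 1 + k) + 1 : ℝ) - 1 / 2 ^ ((m + 1 + k) + 1))
        (1 / ((m + 1 + k) + 1 : ℝ))) := (measure_mono hsub).trans (measure_iUnion_le _)
    _ = ∑' k : ℕ, ENNReal.ofReal ((1/2 : ℝ) ^ (m + 2 + k)) := by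
        congr 1
        funext k
        rw [Real.volume_Ico]
        congr 1
        rw [div_pow]
        ring_nf
    _ = ENNReal.ofReal (∑' k : ℕ, (1/2 : ℝ) ^ (m + 2 + k)) := by
        refine (ENNReal.ofReal_tsum_of_nonneg (fun k => by positivity) ?_).symm
        exact ((summable_geometric_of_lt_one (by norm_num) (by norm_num)).mul_left
            ((1/2 : ℝ) ^ (m + 2))).congr (fun k => (pow_add _ _ _).symm)
    _ = ENNReal.ofReal ((1/2 : ℝ) ^ (m + 1)) := by
        congr 1
        have : ∀ k : ℕ, (1/2 : ℝ) ^ (m + 2 + k) = (1/2 : ℝ) ^ (m + 2) * (1/2 : ℝ) ^ k :=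
          fun k => pow_add _ _ _
        rw [tsum_congr this, tsum_mul_left, tsum_geometric_of_lt_one (by norm_num) (by norm_num)]
        rw [show (1 - (1/2 : ℝ))⁻¹ = 2 by norm_num]
        ring

theorem stmt_17 :
    (∀ ε > 0,
      Tendsto (fun δ : ℝ =>
          volume ({x | ε ≤ |chiOmega x - 0|} ∩ Set.Ioo (-δ) δ) / ENNReal.ofReal (2 * δ))
        (nhdsWithin 0 (Set.Ioi 0)) (nhds 0)) ∧
    (∀ ε : ℝ, ε ∈ Set.Ioc (0:ℝ) 1 → ∀ δ > 0,
      0 < volume {x | x ∈ Set.Ioo (-δ) δ ∧ x ≠ 0 ∧ ε ≤ |chiOmega x - 0|}) := by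
  constructor
  · intro ε hε
    rw [ENNReal.tendsto_nhds_zero]
    intro ε' hε'
    -- choose M such that for all m ≥ M, ofReal ((m+2) * (1/2)^(m+1)) ≤ ε'
    have htend : Tendsto (fun m : ℕ => ENNReal.ofReal (((m:ℝ) + 2) * (1/2 : ℝ) ^ (m + 1)))
        atTop (nhds 0) := by
      rw [show (0 : ENNReal) = ENNReal.ofReal 0 by simp]
      apply ENNReal.tendsto_ofReal
      have h1 : Tendsto (fun m : ℕ => ((m:ℝ) * (1/2 : ℝ) ^ m) * (1/2) + (1/2 : ℝ) ^ m)
          atTop (nhds 0) := by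
        have := (tendsto_self_mul_const_pow_of_lt_one (r := (1/2:ℝ)) (by norm_num)
          (by norm_num)).mul_const (1/2 : ℝ)
        have h2 := tendsto_pow_atTop_nhds_zero_of_lt_one (r := (1/2:ℝ)) (by norm_num)
          (by norm_num)
        simpa using this.add h2
      refine h1.congr (fun m => ?_)
      ring
    obtain ⟨M, hM⟩ := (eventually_atTop).mp (htend.eventually (eventually_le_nhds hε'))
    have hη : (0:ℝ) < 1 / (2 * (M + 1)) := by positivity
    filter_upwards [Ioo_mem_nhdsGT_of_mem (Set.mem_Ico.mpr ⟨le_refl (0:ℝ), hη⟩)]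
    intro δ hδ
    obtain ⟨hδ0, hδη⟩ := hδ
    -- set N = ⌊1/(2δ)⌋, m = N - 1
    set N := ⌊1 / (2 * δ)⌋₊ with hN
    have h2δ : (0:ℝ) < 2 * δ := by linarith
    have hNge : M + 1 ≤ N := by
      apply Nat.le_floor
      push_cast
      rw [le_div_iff₀ h2δ]
      have hlt : ((M:ℝ) + 1) * (2 * δ) < 1 := by
        calc ((M:ℝ) + 1) * (2 * δ) < ((M:ℝ) + 1) * (2 * (1 / (2 * (M + 1)))) := by
              apply mul_lt_mul_of_pos_left _ (by positivity)
              linarith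
          _ = 1 := by field_simp
      linarith
    set m := N - 1 with hm
    have hmN : N = m + 1 := by omega
    have hmM : M ≤ m := by omega
    have hδle : δ ≤ 1 / (2 * (m + 1)) := by
      have hfl : ((m:ℝ) + 1) ≤ 1 / (2 * δ) := by
        have := Nat.floor_le (by positivity : (0:ℝ) ≤ 1 / (2 * δ))
        rw [← hN, hmN] at this
        push_cast at this
        linarith
      rw [le_div_iff₀ (by positivity)]
      rw [le_div_iff₀ h2δ] at hfl
      linarith
    have hup : 1 / (2 * δ) < (m:ℝ) + 2 := by
      have := Nat.lt_floor_add_one (1 / (2 * δ))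
      rw [← hN, hmN] at this
      push_cast at this
      linarith
    -- the set is contained in Ω
    have hsub : {x : ℝ | ε ≤ |chiOmega x - 0|} ∩ Set.Ioo (-δ) δ ⊆
        OmegaSet ∩ Set.Ioo (-δ) δ := fun x hx => ⟨chi_ne_zero hε hx.1, hx.2⟩
    have hvol := (measure_mono hsub).trans (vol_bound m hδle)
    calc volume ({x : ℝ | ε ≤ |chiOmega x - 0|} ∩ Set.Ioo (-δ) δ) / ENNReal.ofReal (2 * δ)
        ≤ ENNReal.ofReal ((1/2 : ℝ) ^ (m + 1)) / ENNReal.ofReal (2 * δ) :=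
          ENNReal.div_le_div_right hvol _
      _ = ENNReal.ofReal ((1/2 : ℝ) ^ (m + 1) / (2 * δ)) :=
          (ENNReal.ofReal_div_of_pos h2δ).symm
      _ ≤ ENNReal.ofReal (((m:ℝ) + 2) * (1/2 : ℝ) ^ (m + 1)) := by
          apply ENNReal.ofReal_le_ofReal
          rw [div_le_iff₀ h2δ]
          calc (1/2 : ℝ) ^ (m + 1) = (1/2 : ℝ) ^ (m + 1) * 1 := by ring
            _ ≤ (1/2 : ℝ) ^ (m + 1) * (((m:ℝ) + 2) * (2 * δ)) := by
                apply mul_le_mul_of_nonneg_left _ (by positivity)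
                rw [div_lt_iff₀ h2δ] at hup
                linarith
            _ = ((m:ℝ) + 2) * (1/2 : ℝ) ^ (m + 1) * (2 * δ) := by ring
      _ ≤ ε' := hM m hmM
  · intro ε hε δ hδ
    obtain ⟨hε0, hε1⟩ := hε
    -- choose n with 1/(n+1) < δ, n ≥ 1
    obtain ⟨n₀, hn₀⟩ := exists_nat_one_div_lt hδ
    set n := max n₀ 1 with hn
    have h1 : (1 / (n + 1 : ℝ)) < δ := by
      calc (1 / (n + 1 : ℝ)) ≤ 1 / (n₀ + 1 : ℝ) := by
            apply one_div_le_one_div_of_le (by positivity)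
            have : (n₀ : ℝ) ≤ n := by exact_mod_cast le_max_left n₀ 1
            linarith
        _ < δ := hn₀
    have hIsub : Set.Ico (1 / (n + 1 : ℝ) - 1 / 2 ^ (n + 1)) (1 / (n + 1 : ℝ)) ⊆
        {x : ℝ | x ∈ Set.Ioo (-δ) δ ∧ x ≠ 0 ∧ ε ≤ |chiOmega x - 0|} := by
      intro x hx
      have hlb := aux_lb n
      have hx1 : (0:ℝ) < x := lt_of_lt_of_le (by positivity) (hlb.trans hx.1)
      have hxΩ : x ∈ OmegaSet := Set.mem_iUnion.mpr ⟨n, hx⟩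
      refine ⟨⟨by linarith, hx.2.trans h1⟩, ne_of_gt hx1, ?_⟩
      rw [chiOmega, Set.indicator_of_mem hxΩ]
      simp only [sub_zero]
      rw [abs_one]
      exact hε1
    apply lt_of_lt_of_le _ (measure_mono hIsub)
    rw [Real.volume_Ico]
    have : (0:ℝ) < 1 / (n + 1 : ℝ) - (1 / (n + 1 : ℝ) - 1 / 2 ^ (n + 1)) := by
      have : (0:ℝ) < 1 / 2 ^ (n + 1) := by positivity
      linarith
    exact ENNReal.ofReal_pos.mpr this
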